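/- arXiv:2508.18668 — 2 statements merged into one kernel-verified Lean document; each statement's English description precedes it below -/
import Mathlib

section
/- Fix 0 < α < 1 and integers 1 ≤ x ≤ n. Let C₁,…,C_x be i.i.d. with P(C = c) = αΓ(c−α)/(Γ(1−α)c!) for c ≥ 1. Then P(Σ_{k=1}^x C_k = n) = α^x x! S_α(n,x) / n!, where S_α(n,x) = (1/(α^x x!)) Σ_{j=0}^{x} (−1)^j binom(x,j) (−jα)_n and (y)_n = y(y+1)⋯(y+n−1) denotes the rising factorial. -/
open MeasureTheory ProbabilityTheory Real Finset

noncomputable def PS (a : ℝ) : PowerSeries ℝ :=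
  PowerSeries.mk (fun m => (∏ i ∈ range m, (a + i)) / m.factorial)

lemma vand (a b : ℝ) : ∀ n : ℕ, ∑ k ∈ range (n+1), (n.choose k : ℝ) *
    ((∏ i ∈ range k, (a + i)) * ∏ i ∈ range (n - k), (b + i))
    = ∏ i ∈ range n, (a + b + i) := by
  intro n
  induction n with
  | zero => simp
  | succ n ih =>
    set T : ℕ → ℝ := fun k => (∏ i ∈ range k, (a + i)) * ∏ i ∈ range (n + 1 - k), (b + i) with hT
    have step1 : ∑ k ∈ range (n+2), ((n+1).choose k : ℝ) * T k
        = (∑ i ∈ range (n+1), (n.choose i : ℝ) * T (i+1))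
          + ((∑ i ∈ range (n+1), (n.choose (i+1) : ℝ) * T (i+1)) + T 0) := by
      rw [Finset.sum_range_succ' (fun k => ((n+1).choose k : ℝ) * T k) (n+1)]
      simp only [Nat.choose_succ_succ' n, Nat.cast_add, add_mul, Nat.choose_zero_right,
        Nat.cast_one, one_mul]
      rw [Finset.sum_add_distrib]
      ring
    have step3 : (∑ i ∈ range (n+1), (n.choose (i+1) : ℝ) * T (i+1)) + T 0
        = ∑ k ∈ range (n+1), (n.choose k : ℝ) * T k := by
      have : ∑ k ∈ range (n+2), (n.choose k : ℝ) * T k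
          = (∑ i ∈ range (n+1), (n.choose (i+1) : ℝ) * T (i+1)) + T 0 := by
        rw [Finset.sum_range_succ' (fun k => (n.choose k : ℝ) * T k) (n+1)]
        simp
      rw [← this, Finset.sum_range_succ]
      simp
    have step4 : ∑ k ∈ range (n+1), (n.choose k : ℝ) * T k
        = ∑ k ∈ range (n+1), (n.choose k : ℝ) *
            ((∏ i ∈ range k, (a + i)) * ∏ i ∈ range (n - k), (b + i)) * (b + n - k) := by
      refine Finset.sum_congr rfl fun k hk => ?_
      have hk' : k ≤ n := by simpa using Nat.lt_succ_iff.mp (mem_range.mp hk)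
      have h1 : n + 1 - k = (n - k) + 1 := by omega
      have h2 : ((n - k : ℕ) : ℝ) = (n : ℝ) - k := by
        push_cast [Nat.cast_sub hk']; ring
      rw [hT]
      simp only [h1, Finset.prod_range_succ, h2]
      ring
    have step5 : ∑ i ∈ range (n+1), (n.choose i : ℝ) * T (i+1)
        = ∑ i ∈ range (n+1), (n.choose i : ℝ) *
            ((∏ j ∈ range i, (a + j)) * ∏ j ∈ range (n - i), (b + j)) * (a + i) := by
      refine Finset.sum_congr rfl fun i hi => ?_
      have h1 : n + 1 - (i+1) = n - i := by omega
      rw [hT]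
      simp only [h1, Finset.prod_range_succ]
      ring
    have step6 : ∑ k ∈ range (n+2), ((n+1).choose k : ℝ) * T k
        = (a + b + n) * ∑ k ∈ range (n+1), (n.choose k : ℝ) *
            ((∏ i ∈ range k, (a + i)) * ∏ i ∈ range (n - k), (b + i)) := by
      rw [step1, step3, step4, step5, Finset.mul_sum, ← Finset.sum_add_distrib]
      refine Finset.sum_congr rfl fun k hk => ?_
      ring
    rw [show n + 1 + 1 = n + 2 from rfl, step6, ih, Finset.prod_range_succ]
    ring

lemma PS_mul (a b : ℝ) : PS a * PS b = PS (a + b) := by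
  ext n
  rw [PowerSeries.coeff_mul, Finset.Nat.sum_antidiagonal_eq_sum_range_succ_mk]
  simp only [PS, PowerSeries.coeff_mk]
  rw [show ((∏ i ∈ range n, (a + b + i)) / n.factorial : ℝ)
      = (∑ k ∈ range (n+1), (n.choose k : ℝ) *
        ((∏ i ∈ range k, (a + i)) * ∏ i ∈ range (n - k), (b + i))) / n.factorial from by
      rw [vand a b n]]
  rw [Finset.sum_div]
  refine Finset.sum_congr rfl fun k hk => ?_
  have hk' : k ≤ n := Nat.lt_succ_iff.mp (mem_range.mp hk)
  have hc : (n.choose k : ℝ) = n.factorial / (k.factorial * (n-k).factorial) :=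
    Nat.cast_choose ℝ hk'
  have h1 : (k.factorial : ℝ) ≠ 0 := Nat.cast_ne_zero.mpr k.factorial_ne_zero
  have h2 : ((n-k).factorial : ℝ) ≠ 0 := Nat.cast_ne_zero.mpr (n-k).factorial_ne_zero
  have h3 : (n.factorial : ℝ) ≠ 0 := Nat.cast_ne_zero.mpr n.factorial_ne_zero
  field_simp [hc]
  rw [hc]
  field_simp

lemma PS_zero : PS 0 = 1 := by
  ext n
  simp only [PS, PowerSeries.coeff_mk, PowerSeries.coeff_one]
  cases n with
  | zero => simp
  | succ m =>
    rw [Finset.prod_eq_zero (Finset.mem_range.mpr (Nat.succ_pos m)) (by norm_num)]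
    simp

lemma PS_pow (a : ℝ) : ∀ j : ℕ, PS a ^ j = PS (j * a)
  | 0 => by simpa using PS_zero.symm
  | (j+1) => by
    rw [pow_succ, PS_pow a j, PS_mul]
    push_cast
    ring_nf

lemma key (α : ℝ) (n x : ℕ) :
    (PowerSeries.coeff n) ((1 - PS (-α)) ^ x)
      = (∑ j ∈ range (x+1), (-1:ℝ)^j * (x.choose j : ℝ) * ∏ i ∈ range n, (-(j:ℝ) * α + i))
        / n.factorial := by
  have hexp : (1 - PS (-α)) ^ x
      = ∑ j ∈ range (x+1), (PowerSeries.C (R := ℝ)) ((-1:ℝ)^j * (x.choose j : ℝ)) * PS (-(j:ℝ) * α) := by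
    rw [sub_eq_neg_add, add_pow]
    refine Finset.sum_congr rfl fun j hj => ?_
    rw [one_pow, mul_one, neg_pow, PS_pow]
    rw [show ((j:ℝ)) * (-α) = -(j:ℝ) * α by ring]
    rw [map_mul, map_pow, map_neg, map_one, map_natCast]
    ring
  rw [hexp, map_sum, Finset.sum_div]
  refine Finset.sum_congr rfl fun j hj => ?_
  rw [PowerSeries.coeff_C_mul]
  simp only [PS, PowerSeries.coeff_mk]
  ring

lemma gam_aux (α : ℝ) (hα₀ : 0 < α) (hα₁ : α < 1) :
    ∀ c : ℕ, 1 ≤ c → α * Real.Gamma ((c:ℝ) - α)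
      = -(∏ i ∈ range c, (-α + i)) * Real.Gamma (1 - α) := by
  intro c hc
  induction c with
  | zero => omega
  | succ m ih =>
    rcases Nat.eq_zero_or_pos m with hm | hm
    · subst hm; simp
    · have hme := ih hm
      have harg : ((m:ℝ)) - α ≠ 0 := by
        have : (1:ℝ) ≤ m := by exact_mod_cast hm
        nlinarith
      have hrec : Real.Gamma (((m+1:ℕ):ℝ) - α) = ((m:ℝ) - α) * Real.Gamma ((m:ℝ) - α) := by
        have := Real.Gamma_add_one harg
        rw [← this]; push_cast; ring_nf
      rw [hrec, Finset.prod_range_succ]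
      have : α * (((m:ℝ) - α) * Real.Gamma ((m:ℝ) - α))
          = ((m:ℝ) - α) * (α * Real.Gamma ((m:ℝ) - α)) := by ring
      rw [this, hme]
      ring


/-- generalized Stirling number S_α(n,x) of Pitman -/
noncomputable def genStirling (α : ℝ) (n x : ℕ) : ℝ :=
  (1 / (α ^ x * (Nat.factorial x : ℝ))) *
    ∑ j ∈ Finset.range (x + 1),
      (-1 : ℝ) ^ j * (Nat.choose x j : ℝ) * ∏ i ∈ Finset.range n, (-(j : ℝ) * α + i)

/-- if C₁,…,C_x are i.i.d. with P(C = c) = αΓ(c−α)/(Γ(1−α)c!) then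
P(Σ C_k = n) = α^x x! S_α(n,x)/n!. -/
theorem stable_cluster_sum_distribution
    {Ω : Type*} [MeasurableSpace Ω] (μ : Measure Ω) [IsProbabilityMeasure μ]
    (α : ℝ) (hα₀ : 0 < α) (hα₁ : α < 1) (n x : ℕ) (hx : 1 ≤ x) (hxn : x ≤ n)
    (C : Fin x → Ω → ℕ) (hmeas : ∀ k, Measurable (C k))
    (hIndep : iIndepFun C μ)
    (hpos : ∀ k, ∀ᵐ ω ∂μ, 1 ≤ C k ω)
    (hpmf : ∀ (k : Fin x) (c : ℕ), 1 ≤ c →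
      (μ {ω | C k ω = c}).toReal
        = α * Real.Gamma ((c : ℝ) - α) / (Real.Gamma (1 - α) * (Nat.factorial c : ℝ))) :
    (μ {ω | (∑ k, C k ω) = n}).toReal
      = α ^ x * (Nat.factorial x : ℝ) * genStirling α n x / (Nat.factorial n : ℝ) := by
  classical
  set p : ℕ → ℝ := fun c => if c = 0 then 0 else
    α * Real.Gamma ((c:ℝ) - α) / (Real.Gamma (1 - α) * c.factorial) with hpdef
  have hGpos : 0 < Real.Gamma (1 - α) := Real.Gamma_pos_of_pos (by linarith)
  have hGne : Real.Gamma (1 - α) ≠ 0 := ne_of_gt hGpos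
  -- the pmf series is 1 - PS (-α)
  have hpcoef : PowerSeries.mk p = 1 - PS (-α) := by
    ext m
    rw [PowerSeries.coeff_mk, map_sub, PowerSeries.coeff_one]
    simp only [PS, PowerSeries.coeff_mk]
    cases m with
    | zero => simp [hpdef]
    | succ k =>
      have h1 : (k+1 : ℕ) ≠ 0 := Nat.succ_ne_zero k
      have h2 := gam_aux α hα₀ hα₁ (k+1) (Nat.succ_le_succ (Nat.zero_le k))
      have hfne : ((k+1 : ℕ).factorial : ℝ) ≠ 0 := Nat.cast_ne_zero.mpr (Nat.factorial_ne_zero _)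
      rw [hpdef]
      simp only [h1, if_false, if_neg (Nat.succ_ne_zero k)]
      rw [h2]
      field_simp
      ring
    -- end hpcoef
  set S := Finset.finsuppAntidiag (range x) n with hS
  set E : (ℕ →₀ ℕ) → Set Ω := fun l => ⋂ k : Fin x, {ω | C k ω = l k.val} with hE
  have hEmeas : ∀ l, MeasurableSet (E l) := fun l =>
    MeasurableSet.iInter fun k => (hmeas k) (measurableSet_singleton _)
  have hcover : {ω | (∑ k, C k ω) = n} = ⋃ l ∈ S, E l := by
    ext ω
    simp only [Set.mem_setOf_eq, Set.mem_iUnion]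
    constructor
    · intro hω
      set l : ℕ →₀ ℕ := Finsupp.onFinset (range x)
        (fun i => if h : i < x then C ⟨i, h⟩ ω else 0)
        (by intro i hi; rw [Finset.mem_range]; by_contra h; simp [h] at hi) with hl
      have hlval : ∀ k : Fin x, l k.val = C k ω := by
        intro k
        simp only [hl, Finsupp.onFinset_apply, dif_pos k.isLt]
      refine ⟨l, ?_, ?_⟩
      · rw [hS, Finset.mem_finsuppAntidiag]
        constructor
        · rw [← hω, ← Fin.sum_univ_eq_sum_range (fun i => l i) x]
          exact Finset.sum_congr rfl fun k _ => hlval k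
        · exact Finsupp.support_onFinset_subset
      · rw [hE]
        exact Set.mem_iInter.mpr fun k => (hlval k).symm
    · rintro ⟨l, hlS, hωl⟩
      rw [hS, Finset.mem_finsuppAntidiag] at hlS
      rw [hE, Set.mem_iInter] at hωl
      calc ∑ k, C k ω = ∑ k : Fin x, l k.val := Finset.sum_congr rfl fun k _ => hωl k
        _ = ∑ i ∈ range x, l i := Fin.sum_univ_eq_sum_range (fun i => l i) x
        _ = n := hlS.1
  have hdisj : (↑S : Set (ℕ →₀ ℕ)).PairwiseDisjoint E := by
    intro l hl l' hl' hne
    refine Set.disjoint_left.mpr fun ω hω hω' => hne ?_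
    rw [hE, Set.mem_iInter] at hω hω'
    rw [Finset.mem_coe, hS, Finset.mem_finsuppAntidiag] at hl hl'
    ext i
    by_cases h : i < x
    · have := (hω ⟨i, h⟩).symm.trans (hω' ⟨i, h⟩)
      exact this
    · have h1 : l i = 0 := by
        by_contra hc
        exact h (Finset.mem_range.mp (hl.2 (Finsupp.mem_support_iff.mpr hc)))
      have h2 : l' i = 0 := by
        by_contra hc
        exact h (Finset.mem_range.mp (hl'.2 (Finsupp.mem_support_iff.mpr hc)))
      rw [h1, h2]
  have hμ : μ {ω | (∑ k, C k ω) = n} = ∑ l ∈ S, μ (E l) := by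
    rw [hcover]
    exact measure_biUnion_finset hdisj (fun l _ => hEmeas l)
  have hprod : ∀ l : ℕ →₀ ℕ, μ (E l) = ∏ k : Fin x, μ {ω | C k ω = l k.val} := fun l =>
    hIndep.meas_iInter (fun k => ⟨{l k.val}, measurableSet_singleton _, rfl⟩)
  have hzero : ∀ k : Fin x, μ {ω | C k ω = 0} = 0 := by
    intro k
    have h := hpos k
    rw [ae_iff] at h
    refine measure_mono_null (fun ω hω => ?_) h
    simp only [Set.mem_setOf_eq] at hω ⊢
    omega
  have hterm : ∀ (k : Fin x) (c : ℕ), (μ {ω | C k ω = c}).toReal = p c := by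
    intro k c
    rcases Nat.eq_zero_or_pos c with rfl | hc
    · simp [hzero k, hpdef]
    · rw [hpmf k c hc, hpdef]
      simp [Nat.pos_iff_ne_zero.mp hc]
  have hsum : (μ {ω | (∑ k, C k ω) = n}).toReal
      = ∑ l ∈ S, ∏ i ∈ range x, p (l i) := by
    rw [hμ, ENNReal.toReal_sum (fun l _ => measure_ne_top μ _)]
    refine Finset.sum_congr rfl fun l hl => ?_
    rw [hprod l, ENNReal.toReal_prod]
    rw [show (∏ k : Fin x, (μ {ω | C k ω = l k.val}).toReal) = ∏ k : Fin x, p (l k.val) from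
      Finset.prod_congr rfl fun k _ => hterm k _]
    exact Fin.prod_univ_eq_prod_range (fun i => p (l i)) x
  have hcoeff : ∑ l ∈ S, ∏ i ∈ range x, p (l i)
      = (PowerSeries.coeff n) ((PowerSeries.mk p) ^ x) := by
    rw [PowerSeries.coeff_pow]
    exact (Finset.sum_congr rfl fun l hl => Finset.prod_congr rfl fun i _ => by
      rw [PowerSeries.coeff_mk]).symm
  rw [hsum, hcoeff, hpcoef, key α n x, genStirling]
  have hxne : (α : ℝ) ^ x * (x.factorial : ℝ) ≠ 0 := by positivity
  field_simp
  simp only [mul_comm α]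
end

section
/- Fix 0 < β < α < 1 and θ > −β. For integers m₁,…,m_k ≥ 1 with m = Σ m_j, define the PD(a,t)-EPPF p_{a,t}(m₁,…,m_k) = (∏_{i=1}^{k−1}(t+ia) / (t+1)_{m−1}) ∏_{j=1}^{k} (1−a)_{m_j−1}, where (y)_n is the rising factorial and the empty product is 1. Let r ≥ 1, let x₁,…,x_r ≥ 1 be integers with K = Σ_l x_l, and for each l ∈ {1,…,r} let c_{l,1},…,c_{l,x_l} ≥ 1 be integers with n_l = Σ_{k=1}^{x_l} c_{l,k}; set n = Σ_l n_l. Then p_{β/α, θ/α}(x₁,…,x_r) · p_{α,θ}(c_{1,1},…,c_{r,x_r}) = (∏_{l=1}^{r} p_{α,−β}(c_{l,1},…,c_{l,x_l})) · p_{β,θ}(n₁,…,n_r), where on the left the second factor is evaluated at all K counts c_{l,k}. -/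
open Finset

/-- rising factorial (y)_n = y(y+1)⋯(y+n−1) -/
noncomputable def risingFac (y : ℝ) (n : ℕ) : ℝ := ∏ i ∈ Finset.range n, (y + i)

/-- PD(a,t)-EPPF: p_{a,t}(m₁,…,m_k) =
(∏_{i=1}^{k−1}(t+ia) / (t+1)_{m−1}) ∏_j (1−a)_{m_j−1}, where m = Σ m_j. -/
noncomputable def eppf (a t : ℝ) {ι : Type*} [Fintype ι] (m : ι → ℕ) : ℝ :=
  (∏ i ∈ Finset.range (Fintype.card ι - 1), (t + (i + 1) * a))
      / risingFac (t + 1) ((∑ i, m i) - 1)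
    * ∏ i, risingFac (1 - a) (m i - 1)

lemma risingFac_pos {y : ℝ} (hy : 0 < y) (n : ℕ) : 0 < risingFac y n :=
  Finset.prod_pos fun i _ => by positivity

lemma key_step (a P Q Q2 D1 D2 DL : ℝ) (m1 m2 : ℕ) (hD1 : D1 ≠ 0)
    (hD2 : D2 ≠ 0) (hDL : DL ≠ 0) :
    P / D1 * Q * (a ^ (m1 + m2) * D1 / D2 * Q2)
      = a ^ m1 * Q / DL * Q2 * (a ^ m2 * P / D2 * DL) := by
  rw [pow_add]
  field_simp

lemma prod_scale (a : ℝ) (f g : ℕ → ℝ) (h : ∀ i, a * f i = g i) (n : ℕ) :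
    ∏ i ∈ Finset.range n, g i = a ^ n * ∏ i ∈ Finset.range n, f i := by
  simp only [← h, Finset.prod_mul_distrib, Finset.prod_const, Finset.card_range]

/-- Pitman's coagulation–fragmentation duality for the two-parameter
Poisson–Dirichlet family as an exact identity of EPPFs:
p_{β/α,θ/α}(x₁,…,x_r) · p_{α,θ}(all c_{l,k})
 = (∏_l p_{α,−β}(c_{l,1},…,c_{l,x_l})) · p_{β,θ}(n₁,…,n_r), n_l = Σ_k c_{l,k}. -/
theorem pitman_coag_frag_duality
    (α β θ : ℝ) (hβ₀ : 0 < β) (hβα : β < α) (hα₁ : α < 1) (hθ : -β < θ)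
    (r : ℕ) (hr : 1 ≤ r) (x : Fin r → ℕ) (hx : ∀ l, 1 ≤ x l)
    (c : (l : Fin r) → Fin (x l) → ℕ) (hc : ∀ l k, 1 ≤ c l k) :
    eppf (β / α) (θ / α) x * eppf α θ (fun p : (Σ l : Fin r, Fin (x l)) => c p.1 p.2)
      = (∏ l, eppf α (-β) (c l)) * eppf β θ (fun l => ∑ k, c l k) := by
  have hα0 : (0:ℝ) < α := hβ₀.trans hβα
  have hαne : α ≠ 0 := ne_of_gt hα0
  have hβ1 : β < 1 := hβα.trans hα₁
  -- abbreviations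
  set K : ℕ := ∑ l, x l with hK
  set nl : Fin r → ℕ := fun l => ∑ k, c l k with hnl
  set N : ℕ := ∑ l, nl l with hN
  have hrK : r ≤ K := by
    calc r = ∑ _l : Fin r, 1 := by simp
    _ ≤ ∑ l, x l := Finset.sum_le_sum fun l _ => hx l
  have hexp : K - r + (r - 1) = K - 1 := by omega
  -- cardinalities and sums over the sigma type
  have hcard : Fintype.card ((l : Fin r) × Fin (x l)) = K := by
    simp [Fintype.card_sigma, hK]
  have hsum : (∑ p : (l : Fin r) × Fin (x l), c p.1 p.2) = N := by
    rw [← Finset.univ_sigma_univ, Finset.sum_sigma]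
  have hprodsig : (∏ p : (l : Fin r) × Fin (x l), risingFac (1 - α) (c p.1 p.2 - 1))
      = ∏ l, ∏ k, risingFac (1 - α) (c l k - 1) := by
    rw [← Finset.univ_sigma_univ, Finset.prod_sigma]
  -- nonvanishing of denominators
  have hθα : (0:ℝ) < θ / α + 1 := by
    have : -1 < θ / α := by rw [lt_div_iff₀ hα0]; linarith
    linarith
  have hD1 : risingFac (θ / α + 1) (K - 1) ≠ 0 := ne_of_gt (risingFac_pos hθα _)
  have hD2 : risingFac (θ + 1) (N - 1) ≠ 0 :=
    ne_of_gt (risingFac_pos (by linarith) _)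
  have hDl : ∀ l : Fin r, risingFac (1 - β) (nl l - 1) ≠ 0 :=
    fun l => ne_of_gt (risingFac_pos (by linarith) _)
  have hDL : (∏ l, risingFac (1 - β) (nl l - 1)) ≠ 0 :=
    Finset.prod_ne_zero_iff.mpr fun l _ => hDl l
  -- scaling identities
  have hP2 : (∏ i ∈ Finset.range (K - 1), (θ + ((i : ℝ) + 1) * α))
      = α ^ (K - 1) * risingFac (θ / α + 1) (K - 1) := by
    exact prod_scale α (fun i => θ / α + 1 + i) (fun i => θ + ((i : ℝ) + 1) * α)
      (fun i => by field_simp; try ring) (K - 1)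
  have hP3 : (∏ i ∈ Finset.range (r - 1), (θ + ((i : ℝ) + 1) * β))
      = α ^ (r - 1) * ∏ i ∈ Finset.range (r - 1), (θ / α + ((i : ℝ) + 1) * (β / α)) := by
    exact prod_scale α (fun i => θ / α + ((i : ℝ) + 1) * (β / α))
      (fun i => θ + ((i : ℝ) + 1) * β) (fun i => by field_simp; try ring) (r - 1)
  have hPl : ∀ l : Fin r, (∏ i ∈ Finset.range (x l - 1), (-β + ((i : ℝ) + 1) * α))
      = α ^ (x l - 1) * risingFac (1 - β / α) (x l - 1) := by
    intro l
    exact prod_scale α (fun i => 1 - β / α + i) (fun i => -β + ((i : ℝ) + 1) * α)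
      (fun i => by field_simp; try ring) (x l - 1)
  have hpow : (∏ l, α ^ (x l - 1)) = α ^ (K - r) := by
    rw [Finset.prod_pow_eq_pow_sum]
    congr 1
    have h1 : (∑ l, ((x l - 1) + 1)) = ∑ l, x l :=
      Finset.sum_congr rfl fun l _ => by have := hx l; omega
    rw [Finset.sum_add_distrib] at h1
    simp only [Finset.sum_const, Finset.card_univ, Fintype.card_fin, smul_eq_mul, mul_one] at h1
    omega
  -- unfold and finish
  simp only [eppf, hcard, hsum, hprodsig, Fintype.card_fin, ← hK, ← hN, ← hnl]
  rw [hP2, hP3]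
  have e1 : (∏ l, ∏ i ∈ Finset.range (x l - 1), (-β + ((i : ℝ) + 1) * α))
      = α ^ (K - r) * ∏ l, risingFac (1 - β / α) (x l - 1) := by
    rw [← hpow, ← Finset.prod_mul_distrib]
    exact Finset.prod_congr rfl fun l _ => hPl l
  have e2 : (∏ l, risingFac (-β + 1) (nl l - 1))
      = ∏ l, risingFac (1 - β) (nl l - 1) :=
    Finset.prod_congr rfl fun l _ => by rw [neg_add_eq_sub]
  rw [Finset.prod_mul_distrib, Finset.prod_div_distrib, e1, e2,
    show K - 1 = (K - r) + (r - 1) from hexp.symm]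
  have hD1' : risingFac (θ / α + 1) (K - r + (r - 1)) ≠ 0 := by rw [hexp]; exact hD1
  exact key_step α _ _ _ _ _ _ (K - r) (r - 1) hD1' hD2 hDL
end
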